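/- If N is a closed normal subgroup of a topological group G with N ⊆ KO(G), then KO(G)/N = KO(G/N); in particular KO(G/KO(G)) is trivial. -/

import Mathlib

def KO (G : Type*) [Group G] [TopologicalSpace G] : Subgroup G :=
  ⨅ (n : ℕ) (ρ : G →* GL (Fin n) ℂ) (_ : Continuous ρ), ρ.ker

instance KO.normal (G : Type*) [Group G] [TopologicalSpace G] : (KO G).Normal := by
  constructor
  intro x hx g
  simp only [KO, Subgroup.mem_iInf] at hx ⊢
  intro n ρ hρ
  have h := hx n ρ hρ
  rw [MonoidHom.mem_ker] at h ⊢
  simp [h]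

lemma KO_map {G : Type*} [Group G] [TopologicalSpace G] [IsTopologicalGroup G]
    (N : Subgroup G) [N.Normal] (hle : N ≤ KO G) :
    (KO G).map (QuotientGroup.mk' N) = KO (G ⧸ N) := by
  apply le_antisymm
  · intro y hy
    rw [Subgroup.mem_map] at hy
    obtain ⟨x, hx, rfl⟩ := hy
    simp only [KO, Subgroup.mem_iInf] at hx
    simp only [KO, Subgroup.mem_iInf]
    intro n ρ hρ
    rw [MonoidHom.mem_ker]
    exact hx n (ρ.comp (QuotientGroup.mk' N)) (hρ.comp continuous_quot_mk)
  · intro y hy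
    obtain ⟨x, rfl⟩ := QuotientGroup.mk'_surjective N y
    rw [Subgroup.mem_map]
    refine ⟨x, ?_, rfl⟩
    simp only [KO, Subgroup.mem_iInf] at hy
    simp only [KO, Subgroup.mem_iInf]
    intro n ρ hρ
    have hN : N ≤ ρ.ker := by
      intro z hz
      have := hle hz
      simp only [KO, Subgroup.mem_iInf] at this
      exact this n ρ hρ
    have hcont : Continuous (QuotientGroup.lift N ρ hN) := by
      rw [(QuotientGroup.isQuotientMap_mk N).continuous_iff]
      exact hρ
    have h := hy n (QuotientGroup.lift N ρ hN) hcont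
    rw [MonoidHom.mem_ker] at h ⊢
    simpa using h

theorem KO_quotient {G : Type*} [Group G] [TopologicalSpace G] [IsTopologicalGroup G]
    (N : Subgroup G) [N.Normal] (hclosed : IsClosed (N : Set G)) (hle : N ≤ KO G) :
    (KO G).map (QuotientGroup.mk' N) = KO (G ⧸ N) ∧ KO (G ⧸ KO G) = ⊥ := by
  refine ⟨KO_map N hle, ?_⟩
  rw [← KO_map (KO G) le_rfl, Subgroup.map_eq_bot_iff, QuotientGroup.ker_mk']
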